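/- Let v ∈ ℂᴺ be nonzero and define μ(z) = ⟨z, v⟩/‖v‖². For an entire function h : ℂᴺ → ℂ and points a ∈ ℂ, define Gg(z) = ∫ from a to μ(z) of g(η(t, z)) dt where η(t,z) = ψ(t v + π(z)) for any holomorphic ψ and linear π with the property that ψ(μ(z)v + π(z)) = χ(z) for a fixed holomorphic map χ. Then the directional derivative satisfies D_v(Gg)(z) = g(χ(z)). In the paper's setting, with Sg(z) = ∫_{μ(z₀)}^{μ(z)} g(φ⁻¹(tv + π̃(z) + π₂(z))) dt, one has D_v(Sg)(z) = g(φ⁻¹(z)), hence (C_φ ∘ D_v) ∘ S = Id on H(ℂᴺ). -/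

import Mathlib

open scoped ComplexInnerProductSpace in
/-- μ(z) = ⟨z,v⟩/‖v‖² (linear in z). -/
noncomputable def muF {N : ℕ} (v z : EuclideanSpace ℂ (Fin N)) : ℂ :=
  (inner ℂ v z : ℂ) / (‖v‖ : ℂ) ^ 2

/-- φ⁻¹(z) = A⁻¹(z - b). -/
noncomputable def phiInv {N : ℕ} (A : Matrix (Fin N) (Fin N) ℂ)
    (b z : EuclideanSpace ℂ (Fin N)) : EuclideanSpace ℂ (Fin N) :=
  Matrix.toEuclideanLin A⁻¹ (z - b)

/-- Sg(z) = ∫_{μ(z₀)}^{μ(z)} g(φ⁻¹(t v + π̃(z) + π₂(z))) dt, the integral over the complex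
segment from μ(z₀) to μ(z) parametrized by t = μ(z₀) + s(μ(z) - μ(z₀)), s ∈ [0,1];
here π̃(z) = π₁(z) - μ(z)v, π₂ = I - π₁, π₁ the orthogonal projection onto M. -/
noncomputable def Sop {N : ℕ} (A : Matrix (Fin N) (Fin N) ℂ)
    (b z₀ v : EuclideanSpace ℂ (Fin N)) (M : Submodule ℂ (EuclideanSpace ℂ (Fin N)))
    (g : EuclideanSpace ℂ (Fin N) → ℂ) (z : EuclideanSpace ℂ (Fin N)) : ℂ :=
  (muF v z - muF v z₀) * ∫ s in (0:ℝ)..1,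
    g (phiInv A b ((muF v z₀ + (s : ℂ) * (muF v z - muF v z₀)) • v
      + (((M.orthogonalProjection z : EuclideanSpace ℂ (Fin N))) - muF v z • v)
      + (z - (M.orthogonalProjection z : EuclideanSpace ℂ (Fin N)))))

open intervalIntegral MeasureTheory Metric Set Filter

section aux

lemma primitive_hasDerivAt (h : ℂ → ℂ) (hh : Differentiable ℂ h) (a w : ℂ) :
    HasDerivAt (fun w => (w - a) * ∫ t in (0:ℝ)..1, h (a + (t : ℂ) * (w - a))) (h w) w := by
  have hch : Continuous h := hh.continuous
  have hfc : Continuous (fderiv ℂ h) :=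
    continuous_iff_continuousAt.2 fun z => ((hh.analyticAt z).fderiv).continuousAt
  have hdc : Continuous (deriv h) := by
    have : deriv h = fun z => fderiv ℂ h z 1 := funext fun z => (fderiv_apply_one_eq_deriv).symm
    rw [this]
    exact (ContinuousLinearMap.apply ℂ ℂ (1 : ℂ)).continuous.comp hfc
  set F : ℂ → ℝ → ℂ := fun x t => (x - a) * h (a + (t : ℂ) * (x - a)) with hF
  set F' : ℂ → ℝ → ℂ := fun x t =>
    h (a + (t : ℂ) * (x - a)) + (x - a) * (deriv h (a + (t : ℂ) * (x - a)) * (t : ℂ)) with hF'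
  have hFcont : ∀ x : ℂ, Continuous (fun t : ℝ => F x t) := by
    intro x
    exact continuous_const.mul (hch.comp (by fun_prop))
  have hF'cont : ∀ x : ℂ, Continuous (fun t : ℝ => F' x t) := by
    intro x
    exact (hch.comp (by fun_prop)).add
      (continuous_const.mul ((hdc.comp (by fun_prop)).mul (by fun_prop)))
  -- bound
  set R : ℝ := ‖w - a‖ + 1 with hR
  obtain ⟨C, hC⟩ : ∃ C, ∀ y ∈ closedBall a R, ‖h y‖ + R * ‖deriv h y‖ ≤ C := by
    obtain ⟨y₀, -, hy₀⟩ := (isCompact_closedBall a R).exists_isMaxOn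
      ⟨a, mem_closedBall_self (by positivity)⟩
      ((hch.norm.add (continuous_const.mul hdc.norm)).continuousOn)
    exact ⟨_, hy₀⟩
  have key := intervalIntegral.hasDerivAt_integral_of_dominated_loc_of_deriv_le
    (μ := volume) (F := F) (F' := F') (x₀ := w) (a := 0) (b := 1) (bound := fun _ => C)
    (ball_mem_nhds w one_pos)
    (Filter.Eventually.of_forall fun x => (hFcont x).aestronglyMeasurable)
    ((hFcont w).intervalIntegrable 0 1)
    ((hF'cont w).aestronglyMeasurable)
    (ae_of_all _ (by
      intro t ht x hx
      have ht' : t ∈ Set.Ioc (0:ℝ) 1 := by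
        simpa [Set.uIoc_of_le (zero_le_one)] using ht
      have hxa : ‖x - a‖ ≤ R := by
        have : ‖x - w‖ < 1 := by simpa [dist_eq_norm] using hx
        calc ‖x - a‖ = ‖(x - w) + (w - a)‖ := by ring_nf
          _ ≤ ‖x - w‖ + ‖w - a‖ := norm_add_le _ _
          _ ≤ R := by rw [hR]; linarith
      have hmem : a + (t : ℂ) * (x - a) ∈ closedBall a R := by
        rw [mem_closedBall, dist_eq_norm]
        have : ‖a + (t:ℂ) * (x - a) - a‖ = |t| * ‖x - a‖ := by
          simp [norm_mul]
        rw [this]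
        calc |t| * ‖x - a‖ ≤ 1 * R := by
              apply mul_le_mul _ hxa (norm_nonneg _) zero_le_one
              rw [abs_le]; constructor <;> linarith [ht'.1, ht'.2]
          _ = R := one_mul R
      have habs : |t| ≤ 1 := by
        rw [abs_le]; constructor <;> linarith [ht'.1, ht'.2]
      have h1 : ‖(x - a) * (deriv h (a + (t:ℂ) * (x - a)) * (t:ℂ))‖
          ≤ R * ‖deriv h (a + (t:ℂ) * (x - a))‖ := by
        rw [norm_mul, norm_mul, Complex.norm_real, Real.norm_eq_abs]
        exact mul_le_mul hxa (mul_le_of_le_one_right (norm_nonneg _) habs)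
          (mul_nonneg (norm_nonneg _) (abs_nonneg t)) (by rw [hR]; positivity)
      calc ‖F' x t‖ ≤ ‖h (a + (t:ℂ) * (x - a))‖
            + ‖(x - a) * (deriv h (a + (t:ℂ) * (x - a)) * (t:ℂ))‖ := norm_add_le _ _
        _ ≤ ‖h (a + (t:ℂ) * (x - a))‖ + R * ‖deriv h (a + (t:ℂ) * (x - a))‖ := by linarith
        _ ≤ C := hC _ hmem))
    (intervalIntegrable_const)
    (ae_of_all _ (by
      intro t ht x hx
      have h1 : HasDerivAt (fun x : ℂ => a + (t : ℂ) * (x - a)) (t : ℂ) x := by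
        simpa using (((hasDerivAt_id x).sub_const a).const_mul (t:ℂ)).const_add a
      have h2 : HasDerivAt h (deriv h (a + (t:ℂ) * (x - a))) (a + (t:ℂ) * (x - a)) :=
        (hh _).hasDerivAt
      have h3 := h2.comp x h1
      have h4 : HasDerivAt (fun x : ℂ => x - a) 1 x := (hasDerivAt_id x).sub_const a
      have h5 := h4.mul h3
      rw [one_mul] at h5
      exact h5))
  obtain ⟨-, hder⟩ := key
  -- compute the value of the derivative integral
  have hval : (∫ t in (0:ℝ)..1, F' w t) = h w := by
    have hu : ∀ t ∈ uIcc (0:ℝ) 1,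
        HasDerivAt (fun t : ℝ => (t : ℂ) * h (a + (t : ℂ) * (w - a))) (F' w t) t := by
      intro t _
      have hre : HasDerivAt (fun t : ℝ => (t : ℂ)) 1 t := by
        simpa using (hasDerivAt_id t).ofReal_comp
      have hc : HasDerivAt (fun t : ℝ => a + (t : ℂ) * (w - a)) (w - a) t := by
        simpa using (hre.mul_const (w - a)).const_add a
      have h2 : HasDerivAt h (deriv h (a + (t:ℂ) * (w - a))) (a + (t:ℂ) * (w - a)) :=
        (hh _).hasDerivAt
      have h3 : HasDerivAt (fun t : ℝ => h (a + (t : ℂ) * (w - a)))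
          ((w - a) • deriv h (a + (t:ℂ) * (w - a))) t := h2.scomp t hc
      have := hre.mul h3
      convert this using 1
      · rfl
      · rfl
      · simp [hF', smul_eq_mul]
        ring
    have := intervalIntegral.integral_eq_sub_of_hasDerivAt hu
      ((hF'cont w).intervalIntegrable 0 1)
    rw [this]
    norm_num
  rw [hval] at hder
  apply hder.congr_of_eventuallyEq
  filter_upwards with x
  rw [hF, intervalIntegral.integral_const_mul]

lemma main_limit {N : ℕ} (A : Matrix (Fin N) (Fin N) ℂ)
    (b z₀ v : EuclideanSpace ℂ (Fin N)) (hv : v ≠ 0)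
    (M : Submodule ℂ (EuclideanSpace ℂ (Fin N))) (hvM : v ∈ M)
    (g : EuclideanSpace ℂ (Fin N) → ℂ) (hg : Differentiable ℂ g)
    (z : EuclideanSpace ℂ (Fin N)) :
    Filter.Tendsto
        (fun s : ℂ => (Sop A b z₀ v M g (z + s • v) - Sop A b z₀ v M g z) / s)
        (nhdsWithin 0 {(0 : ℂ)}ᶜ) (nhds (g (phiInv A b z))) := by
  have hvC : (‖v‖ : ℂ) ≠ 0 := by
    exact_mod_cast (Complex.ofReal_ne_zero.mpr (norm_ne_zero_iff.mpr hv))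
  have L1 : ∀ s : ℂ, muF v (z + s • v) = muF v z + s := by
    intro s
    simp only [muF, inner_add_right, inner_smul_right, inner_self_eq_norm_sq_to_K]
    field_simp
    rfl
  have L2 : ∀ s : ℂ, ((M.orthogonalProjection (z + s • v) : EuclideanSpace ℂ (Fin N)))
      = (M.orthogonalProjection z : EuclideanSpace ℂ (Fin N)) + s • v := by
    intro s
    rw [map_add]
    simp only [Submodule.coe_add]
    congr 1
    rw [_root_.map_smul, Submodule.coe_smul]
    congr 1
    exact Submodule.starProjection_eq_self_iff.mpr hvM
  set c : EuclideanSpace ℂ (Fin N) :=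
      ((M.orthogonalProjection z : EuclideanSpace ℂ (Fin N)) - muF v z • v)
      + (z - (M.orthogonalProjection z : EuclideanSpace ℂ (Fin N))) with hc
  set h : ℂ → ℂ := fun τ => g (phiInv A b (τ • v + c)) with hh
  have hlin : Differentiable ℂ
      (⇑(Matrix.toEuclideanLin A⁻¹ : EuclideanSpace ℂ (Fin N) →ₗ[ℂ] EuclideanSpace ℂ (Fin N))) := by
    rw [← LinearMap.coe_toContinuousLinearMap']
    exact (LinearMap.toContinuousLinearMap _).differentiable
  have hphid : Differentiable ℂ (phiInv A b) := by
    unfold phiInv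
    exact hlin.comp (differentiable_id.sub_const b)
  have hhd : Differentiable ℂ h := by
    rw [hh]
    exact hg.comp (hphid.comp ((differentiable_id.smul_const v).add_const c))
  have hveq : ∀ s t : ℂ, (muF v z₀ + t * (muF v z + s - muF v z₀)) • v
      + ((M.orthogonalProjection z : EuclideanSpace ℂ (Fin N)) + s • v - (muF v z + s) • v)
      + (z + s • v - ((M.orthogonalProjection z : EuclideanSpace ℂ (Fin N)) + s • v))
      = (muF v z₀ + t * (muF v z + s - muF v z₀)) • v + c := by
    intro s t
    rw [hc]
    module
  have hrep : ∀ s : ℂ, Sop A b z₀ v M g (z + s • v)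
      = ((muF v z + s) - muF v z₀)
        * ∫ t in (0:ℝ)..1, h (muF v z₀ + (t : ℂ) * ((muF v z + s) - muF v z₀)) := by
    intro s
    unfold Sop
    rw [L1, L2]
    congr 1
    apply intervalIntegral.integral_congr
    intro t _
    simp only [hveq s (t : ℂ), hh]
  have hprim := primitive_hasDerivAt h hhd (muF v z₀) (muF v z)
  have h0 : HasDerivAt (fun s : ℂ => muF v z + s) 1 0 := (hasDerivAt_id 0).const_add (muF v z)
  have hprim' : HasDerivAt
      (fun w => (w - muF v z₀) * ∫ t in (0:ℝ)..1, h (muF v z₀ + (t : ℂ) * (w - muF v z₀)))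
      (h (muF v z)) (muF v z + 0) := by simpa using hprim
  have hcomp : HasDerivAt
      (fun s : ℂ => ((muF v z + s) - muF v z₀)
        * ∫ t in (0:ℝ)..1, h (muF v z₀ + (t : ℂ) * ((muF v z + s) - muF v z₀)))
      (h (muF v z)) 0 := by
    have := hprim'.comp 0 h0
    rw [mul_one] at this
    exact this
  have hval : h (muF v z) = g (phiInv A b z) := by
    have hz : muF v z • v + c = z := by rw [hc]; module
    simp only [hh]
    rw [hz]
  rw [hval] at hcomp
  have hslope := hasDerivAt_iff_tendsto_slope.mp hcomp
  have hz0 : z + (0 : ℂ) • v = z := by simp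
  refine hslope.congr fun s => ?_
  have e1 := hrep s
  have e0 := hrep 0
  rw [hz0] at e0
  simp only [slope_def_field, sub_zero]
  rw [← e1, ← e0]

end aux

/-- In the paper's setting, D_v(Sg)(z) = g(φ⁻¹(z)) (directional derivative as a limit of
difference quotients), and hence (C_φ ∘ D_v) ∘ S = Id on H(ℂᴺ). -/
theorem stmt_15 {N : ℕ} (A : Matrix (Fin N) (Fin N) ℂ) (hA : IsUnit A.det)
    (b z₀ v : EuclideanSpace ℂ (Fin N)) (hv : v ≠ 0)
    (M : Submodule ℂ (EuclideanSpace ℂ (Fin N))) (hvM : v ∈ M)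
    (hMA : ∀ x ∈ M, Matrix.toEuclideanLin A x ∈ M)
    (hMperpA : ∀ x ∈ Mᗮ, Matrix.toEuclideanLin A x ∈ Mᗮ)
    (hz₀ : Matrix.toEuclideanLin A z₀ + b = z₀)
    (g : EuclideanSpace ℂ (Fin N) → ℂ) (hg : Differentiable ℂ g) :
    (∀ z, Filter.Tendsto
        (fun s : ℂ => (Sop A b z₀ v M g (z + s • v) - Sop A b z₀ v M g z) / s)
        (nhdsWithin 0 {(0 : ℂ)}ᶜ) (nhds (g (phiInv A b z)))) ∧
    (∀ z, Filter.Tendsto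
        (fun s : ℂ =>
          (Sop A b z₀ v M g ((Matrix.toEuclideanLin A z + b) + s • v)
            - Sop A b z₀ v M g (Matrix.toEuclideanLin A z + b)) / s)
        (nhdsWithin 0 {(0 : ℂ)}ᶜ) (nhds (g z))) := by
  constructor
  · exact fun z => main_limit A b z₀ v hv M hvM g hg z
  · intro z
    have key := main_limit A b z₀ v hv M hvM g hg (Matrix.toEuclideanLin A z + b)
    have hinv : phiInv A b (Matrix.toEuclideanLin A z + b) = z := by
      unfold phiInv
      rw [add_sub_cancel_right, Matrix.toEuclideanLin_apply, Matrix.toEuclideanLin_apply]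
      simp [Matrix.mulVec_mulVec, Matrix.nonsing_inv_mul A hA]
    rwa [hinv] at key
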